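/- (Proposition 2, part 1) Let n = 3 and 0 < r_1 < r_2 < r_3. The shortest parade α_1 = α_2 = α_3 = 0 is a critical point of L at which the Hessian matrix in the reduced coordinates (α_1, α_2) is positive definite; moreover it is a global minimum of L: L(α_1, α_2) ≥ L(0, 0) for all (α_1, α_2). -/

import Mathlib

open Real

/-- Length of the chordal segment between points at radii `r`, `r'` whose polar angles
differ by `θ`. -/
noncomputable def ell (r r' θ : ℝ) : ℝ :=
  Real.sqrt (r ^ 2 + r' ^ 2 - 2 * r * r' * Real.cos θ)

/-- The perimeter of the connecting cycle for three concentric circles of radii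
`r1, r2, r3`, as a function of the polar angles `a1, a2` of the first two vertices,
the third angle being fixed to `0`. -/
noncomputable def L3 (r1 r2 r3 : ℝ) (a1 a2 : ℝ) : ℝ :=
  ell r1 r2 (a2 - a1) + ell r2 r3 (0 - a2) + ell r3 r1 (a1 - 0)

/-- Partial derivative in the first variable. -/
noncomputable def pd1 (f : ℝ → ℝ → ℝ) (a b : ℝ) : ℝ := deriv (fun x => f x b) a

/-- Partial derivative in the second variable. -/
noncomputable def pd2 (f : ℝ → ℝ → ℝ) (a b : ℝ) : ℝ := deriv (fun y => f a y) b

/-- The Hessian matrix of `L3 r1 r2 r3` at `(a, b)` in the reduced coordinates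
`(α₁, α₂)`. -/
noncomputable def hess3 (r1 r2 r3 a b : ℝ) : Matrix (Fin 2) (Fin 2) ℝ :=
  !![pd1 (pd1 (L3 r1 r2 r3)) a b, pd1 (pd2 (L3 r1 r2 r3)) a b;
     pd2 (pd1 (L3 r1 r2 r3)) a b, pd2 (pd2 (L3 r1 r2 r3)) a b]

/-- Angular derivative of `ell`. -/
noncomputable def ellp (r r' θ : ℝ) : ℝ := r * r' * Real.sin θ / ell r r' θ

lemma q_pos {r r' : ℝ} (hr : 0 < r) (hr' : 0 < r') (hne : r ≠ r') (θ : ℝ) :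
    0 < r ^ 2 + r' ^ 2 - 2 * r * r' * Real.cos θ := by
  have h1 : Real.cos θ ≤ 1 := Real.cos_le_one θ
  have h2 : 0 < r * r' := mul_pos hr hr'
  have h3 : (r - r') ^ 2 > 0 := by
    have : r - r' ≠ 0 := sub_ne_zero.mpr hne
    positivity
  nlinarith

lemma ell_pos {r r' : ℝ} (hr : 0 < r) (hr' : 0 < r') (hne : r ≠ r') (θ : ℝ) :
    0 < ell r r' θ :=
  Real.sqrt_pos.mpr (q_pos hr hr' hne θ)

lemma hasDerivAt_ell {r r' : ℝ} (hr : 0 < r) (hr' : 0 < r') (hne : r ≠ r') (θ : ℝ) :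
    HasDerivAt (fun t => ell r r' t) (ellp r r' θ) θ := by
  have hq : HasDerivAt (fun t => r ^ 2 + r' ^ 2 - 2 * r * r' * Real.cos t)
      (2 * r * r' * Real.sin θ) θ := by
    have := ((Real.hasDerivAt_cos θ).const_mul (2 * r * r')).const_sub (r ^ 2 + r' ^ 2)
    refine this.congr_deriv ?_
    ring
  have hpos := q_pos hr hr' hne θ
  have h := hq.sqrt hpos.ne'
  refine h.congr_deriv ?_
  have hs : (0:ℝ) < Real.sqrt (r ^ 2 + r' ^ 2 - 2 * r * r' * Real.cos θ) :=
    Real.sqrt_pos.mpr hpos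
  rw [ellp, ell]
  field_simp

lemma hasDerivAt_ellp_zero {r r' : ℝ} (hr : 0 < r) (hr' : 0 < r') (hne : r ≠ r') :
    HasDerivAt (fun t => ellp r r' t) (r * r' / ell r r' 0) 0 := by
  have hnum : HasDerivAt (fun t => r * r' * Real.sin t) (r * r' * Real.cos 0) 0 :=
    (Real.hasDerivAt_sin 0).const_mul (r * r')
  have hden := hasDerivAt_ell hr hr' hne 0
  have hd0 : ell r r' 0 ≠ 0 := (ell_pos hr hr' hne 0).ne'
  have h := hnum.div hden hd0
  simp only [ellp]
  refine h.congr_deriv ?_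
  have h0 : ellp r r' 0 = 0 := by simp [ellp]
  rw [h0]
  simp only [Real.sin_zero, Real.cos_zero, mul_one, mul_zero, zero_mul, sub_zero]
  field_simp

lemma ellp_zero (r r' : ℝ) : ellp r r' 0 = 0 := by simp [ellp]

lemma HasDerivAt.comp_const_sub' {f : ℝ → ℝ} {d : ℝ} (c x : ℝ)
    (hf : HasDerivAt f d (c - x)) : HasDerivAt (fun t => f (c - t)) (-d) x := by
  have := HasDerivAt.comp (h₂ := f) (h := fun t => c - t) x hf ((hasDerivAt_id x).const_sub c)
  simpa [Function.comp_def] using this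

lemma HasDerivAt.comp_sub_const' {f : ℝ → ℝ} {d : ℝ} (c x : ℝ)
    (hf : HasDerivAt f d (x - c)) : HasDerivAt (fun t => f (t - c)) d x := by
  have := HasDerivAt.comp (h₂ := f) (h := fun t => t - c) x hf ((hasDerivAt_id x).sub_const c)
  simpa [Function.comp_def] using this

section slices

variable {r1 r2 r3 : ℝ} (h1 : 0 < r1) (h2 : 0 < r2) (h3 : 0 < r3)
  (h12 : r1 ≠ r2) (h23 : r2 ≠ r3) (h31 : r3 ≠ r1)

include h1 h2 h3 h12 h31 in
lemma hd_slice1 (a b : ℝ) :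
    HasDerivAt (fun t => L3 r1 r2 r3 t b)
      (-ellp r1 r2 (b - a) + ellp r3 r1 (a - 0)) a := by
  have hA : HasDerivAt (fun t : ℝ => ell r1 r2 (b - t)) (-(ellp r1 r2 (b - a))) a :=
    HasDerivAt.comp_const_sub' b a (hasDerivAt_ell h1 h2 h12 (b - a))
  have hC : HasDerivAt (fun t : ℝ => ell r3 r1 (t - 0)) (ellp r3 r1 (a - 0)) a :=
    HasDerivAt.comp_sub_const' 0 a (hasDerivAt_ell h3 h1 h31 (a - 0))
  have h := (hA.add_const (ell r2 r3 (0 - b))).add hC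
  exact h

include h1 h2 h3 h12 h23 in
lemma hd_slice2 (a b : ℝ) :
    HasDerivAt (fun t => L3 r1 r2 r3 a t)
      (ellp r1 r2 (b - a) - ellp r2 r3 (0 - b)) b := by
  have hA : HasDerivAt (fun t : ℝ => ell r1 r2 (t - a)) (ellp r1 r2 (b - a)) b :=
    HasDerivAt.comp_sub_const' a b (hasDerivAt_ell h1 h2 h12 (b - a))
  have hB : HasDerivAt (fun t : ℝ => ell r2 r3 (0 - t)) (-(ellp r2 r3 (0 - b))) b :=
    HasDerivAt.comp_const_sub' 0 b (hasDerivAt_ell h2 h3 h23 (0 - b))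
  have h := (hA.add hB).add_const (ell r3 r1 (a - 0))
  exact h.congr_deriv (sub_eq_add_neg _ _).symm

end slices

/-- Proposition 2, part 1: for `0 < r1 < r2 < r3` the shortest parade
`α₁ = α₂ = α₃ = 0` is a critical point of the perimeter, the Hessian in the reduced
coordinates `(α₁, α₂)` is positive definite there, and it is a global minimum. -/
theorem stmt_6 (r1 r2 r3 : ℝ) (h1 : 0 < r1) (h12 : r1 < r2) (h23 : r2 < r3) :
    HasDerivAt (fun t => L3 r1 r2 r3 t 0) 0 0 ∧
    HasDerivAt (fun t => L3 r1 r2 r3 0 t) 0 0 ∧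
    (hess3 r1 r2 r3 0 0).PosDef ∧
    ∀ a1 a2 : ℝ, L3 r1 r2 r3 0 0 ≤ L3 r1 r2 r3 a1 a2 := by
  have h2 : 0 < r2 := h1.trans h12
  have h3 : 0 < r3 := h2.trans h23
  have hn12 : r1 ≠ r2 := ne_of_lt h12
  have hn23 : r2 ≠ r3 := ne_of_lt h23
  have hn31 : r3 ≠ r1 := (h12.trans h23).ne'
  have crit1 : HasDerivAt (fun t => L3 r1 r2 r3 t 0) 0 0 := by
    have := hd_slice1 h1 h2 h3 hn12 hn31 (0:ℝ) 0
    simpa [ellp_zero] using this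
  have crit2 : HasDerivAt (fun t => L3 r1 r2 r3 0 t) 0 0 := by
    have := hd_slice2 h1 h2 h3 hn12 hn23 (0:ℝ) 0
    simpa [ellp_zero] using this
  refine ⟨crit1, crit2, ?_, ?_⟩
  · -- Hessian positive definite
    set A := r1 * r2 / ell r1 r2 0 with hA
    set B := r2 * r3 / ell r2 r3 0 with hB
    set C := r3 * r1 / ell r3 r1 0 with hC
    have hApos : 0 < A := div_pos (mul_pos h1 h2) (ell_pos h1 h2 hn12 0)
    have hBpos : 0 < B := div_pos (mul_pos h2 h3) (ell_pos h2 h3 hn23 0)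
    have hCpos : 0 < C := div_pos (mul_pos h3 h1) (ell_pos h3 h1 hn31 0)
    have ig12 : HasDerivAt (fun t => ellp r1 r2 t) A ((0:ℝ) - 0) := by
      simpa using hasDerivAt_ellp_zero h1 h2 hn12
    have ig23 : HasDerivAt (fun t => ellp r2 r3 t) B ((0:ℝ) - 0) := by
      simpa using hasDerivAt_ellp_zero h2 h3 hn23
    have ig31 : HasDerivAt (fun t => ellp r3 r1 t) C ((0:ℝ) - 0) := by
      simpa using hasDerivAt_ellp_zero h3 h1 hn31
    have hpd1 : ∀ x y : ℝ, pd1 (L3 r1 r2 r3) x y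
        = -ellp r1 r2 (y - x) + ellp r3 r1 (x - 0) := fun x y =>
      (hd_slice1 h1 h2 h3 hn12 hn31 x y).deriv
    have hpd2 : ∀ x y : ℝ, pd2 (L3 r1 r2 r3) x y
        = ellp r1 r2 (y - x) - ellp r2 r3 (0 - y) := fun x y =>
      (hd_slice2 h1 h2 h3 hn12 hn23 x y).deriv
    have c12a : HasDerivAt (fun x : ℝ => ellp r1 r2 (0 - x)) (-A) 0 :=
      HasDerivAt.comp_const_sub' 0 0 ig12
    have c12b : HasDerivAt (fun x : ℝ => ellp r1 r2 (x - 0)) A 0 :=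
      HasDerivAt.comp_sub_const' 0 0 ig12
    have c23a : HasDerivAt (fun x : ℝ => ellp r2 r3 (0 - x)) (-B) 0 :=
      HasDerivAt.comp_const_sub' 0 0 ig23
    have c31b : HasDerivAt (fun x : ℝ => ellp r3 r1 (x - 0)) C 0 :=
      HasDerivAt.comp_sub_const' 0 0 ig31
    have e11 : pd1 (pd1 (L3 r1 r2 r3)) 0 0 = A + C := by
      rw [pd1]
      have hf : (fun x => pd1 (L3 r1 r2 r3) x 0)
          = fun x => -ellp r1 r2 (0 - x) + ellp r3 r1 (x - 0) := funext fun x => hpd1 x 0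
      rw [hf]
      have := (c12a.neg).add c31b
      exact this.deriv.trans (by ring)
    have e12 : pd1 (pd2 (L3 r1 r2 r3)) 0 0 = -A := by
      rw [pd1]
      have hf : (fun x => pd2 (L3 r1 r2 r3) x 0)
          = fun x => ellp r1 r2 (0 - x) - ellp r2 r3 (0 - 0) := funext fun x => hpd2 x 0
      rw [hf]
      have := c12a.sub_const (ellp r2 r3 (0 - 0))
      rw [this.deriv]
    have e21 : pd2 (pd1 (L3 r1 r2 r3)) 0 0 = -A := by
      rw [pd2]
      have hf : (fun y => pd1 (L3 r1 r2 r3) 0 y)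
          = fun y => -ellp r1 r2 (y - 0) + ellp r3 r1 (0 - 0) := funext fun y => hpd1 0 y
      rw [hf]
      have := (c12b.neg).add_const (ellp r3 r1 (0 - 0))
      exact this.deriv
    have e22 : pd2 (pd2 (L3 r1 r2 r3)) 0 0 = A + B := by
      rw [pd2]
      have hf : (fun y => pd2 (L3 r1 r2 r3) 0 y)
          = fun y => ellp r1 r2 (y - 0) - ellp r2 r3 (0 - y) := funext fun y => hpd2 0 y
      rw [hf]
      have := c12b.sub c23a
      exact this.deriv.trans (by ring)
    have hM : hess3 r1 r2 r3 0 0 = !![A + C, -A; -A, A + B] := by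
      rw [hess3, e11, e12, e21, e22]
    rw [hM, Matrix.posDef_iff_dotProduct_mulVec]
    constructor
    · ext i j
      fin_cases i <;> fin_cases j <;>
        simp [Matrix.conjTranspose_apply]
    · intro x hx
      simp [dotProduct, Matrix.mulVec, Fin.sum_univ_two]
      have hx01 : x 0 ≠ 0 ∨ x 1 ≠ 0 := by
        by_contra hcon
        push_neg at hcon
        exact hx (funext fun i => by fin_cases i <;> simp [hcon.1, hcon.2])
      rcases hx01 with h | h
      · nlinarith [mul_pos hCpos (pow_pos (abs_pos.mpr h) 2), sq_abs (x 0),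
          mul_nonneg hApos.le (sq_nonneg (x 0 - x 1)), mul_nonneg hBpos.le (sq_nonneg (x 1))]
      · nlinarith [mul_pos hBpos (pow_pos (abs_pos.mpr h) 2), sq_abs (x 1),
          mul_nonneg hApos.le (sq_nonneg (x 0 - x 1)), mul_nonneg hCpos.le (sq_nonneg (x 0))]
  · -- global minimum
    intro a1 a2
    have key : ∀ r r' : ℝ, 0 < r → 0 < r' → ∀ θ : ℝ, ell r r' 0 ≤ ell r r' θ := by
      intro r r' hr hr' θ
      apply Real.sqrt_le_sqrt
      have := Real.cos_le_one θ
      simp only [Real.cos_zero, mul_one]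
      nlinarith [mul_pos hr hr']
    have e1 := key r1 r2 h1 h2 (a2 - a1)
    have e2 := key r2 r3 h2 h3 (0 - a2)
    have e3 := key r3 r1 h3 h1 (a1 - 0)
    have hz : L3 r1 r2 r3 0 0 = ell r1 r2 0 + ell r2 r3 0 + ell r3 r1 0 := by
      norm_num [L3]
    rw [hz, L3]
    exact add_le_add (add_le_add e1 e2) e3
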